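/- Every GIT region of Θ(Q)_R for the toric cA_{n-1} singularity R_{a,b} contains exactly n!/(a! b!) chambers, and the number of GIT regions is a! · b!. -/

import Mathlib

/-- Two permutations `ω`, `ω' = ω·s_k` of the index set of the zigzag paths are joined
by a wall of type I exactly when the adjacent transposition `s_k` swaps two zigzag
paths of opposite slopes, i.e. it exchanges a `-1` and a `+1` in the sign sequence
(the first `a` letters have sign `-1`, the remaining `b` have sign `+1`). -/
def TypeIAdjacent (a n : ℕ) (ω ω' : Equiv.Perm (Fin n)) : Prop :=
  ∃ (k : ℕ) (h : k + 1 < n),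
    ω' = ω * Equiv.swap ⟨k, Nat.lt_of_succ_lt h⟩ ⟨k + 1, h⟩ ∧
    ¬ (((ω ⟨k, Nat.lt_of_succ_lt h⟩).1 < a) ↔ ((ω ⟨k + 1, h⟩).1 < a))

namespace GITAux
open Finset Equiv

variable {n : ℕ}

lemma perm_apply_inv_self {α : Type*} (ω : Equiv.Perm α) (x : α) : ω (ω⁻¹ x) = x :=
  Equiv.apply_symm_apply ω x

lemma perm_inv_apply_self {α : Type*} (ω : Equiv.Perm α) (x : α) : ω⁻¹ (ω x) = x :=
  Equiv.symm_apply_apply ω x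

/-- the sign word of a permutation: set of positions carrying a "small" value (`< a`). -/
def Wd (a : ℕ) {n : ℕ} (ω : Equiv.Perm (Fin n)) : Finset (Fin n) :=
  Finset.univ.filter (fun i => (ω i).1 < a)

/-- the inversion count of a word. -/
def M {n : ℕ} (W : Finset (Fin n)) : ℕ :=
  (Finset.univ.filter (fun p : Fin n × Fin n => p.1 < p.2 ∧ p.1 ∉ W ∧ p.2 ∈ W)).card

/-- the complete invariant of a GIT region: relative order of same-slope paths. -/
def Φ (a : ℕ) {n : ℕ} (ω : Equiv.Perm (Fin n)) : Fin n → Fin n → Bool :=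
  fun v w => decide (((v.1 < a) ↔ (w.1 < a)) ∧ ω⁻¹ v < ω⁻¹ w)

lemma swap_lt_iff {p q x y : Fin n} (hq : q.1 = p.1 + 1)
    (h : x = y ∨ (x ≠ p ∧ x ≠ q) ∨ (y ≠ p ∧ y ≠ q)) :
    Equiv.swap p q x < Equiv.swap p q y ↔ x < y := by
  have hpq : p ≠ q := by intro e; rw [e] at hq; omega
  rcases h with rfl | h
  · simp
  · have key : ∀ z w : Fin n, z ≠ p → z ≠ q →
        (Equiv.swap p q z < Equiv.swap p q w ↔ z < w) ∧
        (Equiv.swap p q w < Equiv.swap p q z ↔ w < z) := by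
      intro z w hzp hzq
      rw [Equiv.swap_apply_of_ne_of_ne hzp hzq]
      rcases eq_or_ne w p with rfl | hwp
      · rw [Equiv.swap_apply_left]
        have h1 : z.1 ≠ w.1 := fun e => hzp (Fin.ext e)
        have h2 : z.1 ≠ q.1 := fun e => hzq (Fin.ext e)
        constructor <;> rw [Fin.lt_def, Fin.lt_def] <;> omega
      rcases eq_or_ne w q with rfl | hwq
      · rw [Equiv.swap_apply_right]
        have h1 : z.1 ≠ w.1 := fun e => hzq (Fin.ext e)
        have h2 : z.1 ≠ p.1 := fun e => hzp (Fin.ext e)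
        constructor <;> rw [Fin.lt_def, Fin.lt_def] <;> omega
      · rw [Equiv.swap_apply_of_ne_of_ne hwp hwq]
        exact ⟨Iff.rfl, Iff.rfl⟩
    rcases h with ⟨h1, h2⟩ | ⟨h1, h2⟩
    · exact (key x y h1 h2).1
    · exact (key y x h1 h2).2

lemma Wd_mul_swap (a : ℕ) (ω : Equiv.Perm (Fin n)) (p q : Fin n) :
    Wd a (ω * Equiv.swap p q) = (Wd a ω).image (Equiv.swap p q) := by
  ext i
  simp only [Wd, Finset.mem_image, Finset.mem_filter, Finset.mem_univ, true_and]
  simp only [Equiv.Perm.mul_apply]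
  constructor
  · intro h
    exact ⟨Equiv.swap p q i, h, Equiv.swap_apply_self _ _ _⟩
  · rintro ⟨j, hj, rfl⟩
    rwa [Equiv.swap_apply_self]

lemma image_swap_image_swap (W : Finset (Fin n)) (p q : Fin n) :
    ((W.image (Equiv.swap p q)).image (Equiv.swap p q)) = W := by
  rw [Finset.image_image]
  have : (Equiv.swap p q) ∘ (Equiv.swap p q) = id := by
    funext x; simp [Equiv.swap_apply_self]
  rw [this, Finset.image_id]

lemma Φ_step {a : ℕ} {ω ω' : Equiv.Perm (Fin n)} (h : TypeIAdjacent a n ω ω') :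
    Φ a ω = Φ a ω' := by
  obtain ⟨k, hk, rfl, hsign⟩ := h
  set p : Fin n := ⟨k, Nat.lt_of_succ_lt hk⟩ with hp
  set q : Fin n := ⟨k + 1, hk⟩ with hq
  have hinv : (ω * Equiv.swap p q)⁻¹ = Equiv.swap p q * ω⁻¹ := by
    rw [mul_inv_rev, Equiv.swap_inv]
  have hmain : ∀ v w : Fin n, ((v.1 < a) ↔ (w.1 < a)) →
      (Equiv.swap p q (ω⁻¹ v) < Equiv.swap p q (ω⁻¹ w) ↔ ω⁻¹ v < ω⁻¹ w) := by
    intro v w hside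
    apply swap_lt_iff (show q.1 = p.1 + 1 from rfl)
    by_cases hvp : ω⁻¹ v = p ∨ ω⁻¹ v = q
    · by_cases hwp : ω⁻¹ w = p ∨ ω⁻¹ w = q
      · left
        apply ω⁻¹.injective
        rcases hvp with h1 | h1 <;> rcases hwp with h2 | h2 <;> rw [h1, h2]
        · exfalso
          apply hsign
          have hv : v = ω p := by rw [← h1, perm_apply_inv_self]
          have hw : w = ω q := by rw [← h2, perm_apply_inv_self]
          rw [hv, hw] at hside; exact hside
        · exfalso
          apply hsign
          have hv : v = ω q := by rw [← h1, perm_apply_inv_self]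
          have hw : w = ω p := by rw [← h2, perm_apply_inv_self]
          rw [hv, hw] at hside; exact hside.symm
      · right; right; push_neg at hwp; exact hwp
    · right; left; push_neg at hvp; exact hvp
  funext v w
  simp only [Φ, decide_eq_decide, hinv, Equiv.Perm.mul_apply]
  constructor
  · rintro ⟨hside, hlt⟩
    exact ⟨hside, (hmain v w hside).mpr hlt⟩
  · rintro ⟨hside, hlt⟩
    exact ⟨hside, (hmain v w hside).mp hlt⟩

lemma Φ_eqvGen {a : ℕ} {ω ω' : Equiv.Perm (Fin n)}
    (h : Relation.EqvGen (TypeIAdjacent a n) ω ω') : Φ a ω = Φ a ω' := by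
  induction h with
  | rel _ _ h => exact Φ_step h
  | refl => rfl
  | symm _ _ _ ih => exact ih.symm
  | trans _ _ _ _ _ ih1 ih2 => exact ih1.trans ih2

lemma card_filter_lt_val (n m : ℕ) :
    ((Finset.univ : Finset (Fin n)).filter (fun j => j.1 < m)).card = min m n := by
  rw [← Finset.card_range (min m n)]
  apply Finset.card_bij (fun j _ => j.1)
  · intro j hj
    simp only [Finset.mem_filter, Finset.mem_univ, true_and] at hj
    simp only [Finset.mem_range]
    exact lt_min hj j.2
  · intro x hx y hy h
    exact Fin.ext h
  · intro x hx
    simp only [Finset.mem_range, lt_min_iff] at hx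
    exact ⟨⟨x, hx.2⟩, by simp [hx.1], rfl⟩

lemma rank_transfer (ω : Equiv.Perm (Fin n)) (P : Fin n → Prop) [DecidablePred P] (t : Fin n) :
    ((Finset.univ : Finset (Fin n)).filter (fun j => P (ω j) ∧ j < t)).card
      = ((Finset.univ : Finset (Fin n)).filter (fun w => P w ∧ ω⁻¹ w < t)).card := by
  apply Finset.card_bij (fun j _ => ω j)
  · intro j hj
    simp only [Finset.mem_filter, Finset.mem_univ, true_and] at hj ⊢
    exact ⟨hj.1, by rw [perm_inv_apply_self]; exact hj.2⟩
  · intro x _ y _ h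
    exact ω.injective h
  · intro w hw
    simp only [Finset.mem_filter, Finset.mem_univ, true_and] at hw
    exact ⟨ω⁻¹ w, by simp only [Finset.mem_filter, Finset.mem_univ, true_and,
      perm_apply_inv_self]; exact hw, by rw [perm_apply_inv_self]⟩

lemma rank_injOn {W : Finset (Fin n)} {x y : Fin n} (hx : x ∈ W) (hy : y ∈ W)
    (h : (W.filter (· < x)).card = (W.filter (· < y)).card) : x = y := by
  have key : ∀ u v : Fin n, u ∈ W → u < v →
      (W.filter (· < u)).card < (W.filter (· < v)).card := by
    intro u v hu huv
    apply Finset.card_lt_card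
    constructor
    · intro j hj
      simp only [Finset.mem_filter] at hj ⊢
      exact ⟨hj.1, hj.2.trans huv⟩
    · intro hsub
      have h1 : u ∈ W.filter (· < v) := Finset.mem_filter.mpr ⟨hu, huv⟩
      have h2 := hsub h1
      simp only [Finset.mem_filter] at h2
      exact absurd h2.2 (lt_irrefl u)
  rcases lt_trichotomy x y with hlt | he | hlt
  · exact absurd h (key x y hx hlt).ne
  · exact he
  · exact absurd h.symm (key y x hy hlt).ne

lemma card_Wd (a b : ℕ) (ω : Equiv.Perm (Fin (a + b))) : (Wd a ω).card = a := by
  have : (Wd a ω).card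
      = ((Finset.univ : Finset (Fin (a + b))).filter (fun w => w.1 < a)).card := by
    apply Finset.card_bij (fun j _ => ω j)
    · intro j hj
      simp only [Wd, Finset.mem_filter, Finset.mem_univ, true_and] at hj ⊢
      exact hj
    · intro x _ y _ h; exact ω.injective h
    · intro w hw
      simp only [Finset.mem_filter, Finset.mem_univ, true_and] at hw
      exact ⟨ω⁻¹ w, by simp only [Wd, Finset.mem_filter, Finset.mem_univ, true_and,
        perm_apply_inv_self]; exact hw, by rw [perm_apply_inv_self]⟩
  rw [this, card_filter_lt_val]
  omega

lemma mem_image_swap {W : Finset (Fin n)} {p q x : Fin n} :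
    x ∈ W.image (Equiv.swap p q) ↔ Equiv.swap p q x ∈ W := by
  simp only [Finset.mem_image]
  constructor
  · rintro ⟨y, hy, rfl⟩; rwa [Equiv.swap_apply_self]
  · intro h; exact ⟨Equiv.swap p q x, h, Equiv.swap_apply_self _ _ _⟩

lemma adjacent_pair {W : Finset (Fin n)} (h : M W ≠ 0) :
    ∃ (k : ℕ) (hk : k + 1 < n),
      (⟨k, Nat.lt_of_succ_lt hk⟩ : Fin n) ∉ W ∧ (⟨k + 1, hk⟩ : Fin n) ∈ W := by
  have : ∃ p : Fin n × Fin n, p.1 < p.2 ∧ p.1 ∉ W ∧ p.2 ∈ W := by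
    by_contra hc
    push_neg at hc
    apply h
    simp only [M, Finset.card_eq_zero, Finset.filter_eq_empty_iff]
    intro p _
    intro hp
    exact absurd (hc p hp.1 hp.2.1) (by simp [hp.2.2])
  obtain ⟨⟨i, j⟩, hij, hiW, hjW⟩ := this
  clear h
  have main : ∀ d (i j : Fin n), i < j → j.1 - i.1 ≤ d → i ∉ W → j ∈ W →
      ∃ (k : ℕ) (hk : k + 1 < n),
        (⟨k, Nat.lt_of_succ_lt hk⟩ : Fin n) ∉ W ∧ (⟨k + 1, hk⟩ : Fin n) ∈ W := by
    intro d
    induction d with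
    | zero => intro i j hij hd _ _; exfalso; rw [Fin.lt_def] at hij; omega
    | succ d ih =>
      intro i j hij hd hiW hjW
      have hlt : i.1 + 1 < n := by
        rw [Fin.lt_def] at hij
        have := j.2
        omega
      set m : Fin n := ⟨i.1 + 1, hlt⟩ with hm
      by_cases hmW : m ∈ W
      · refine ⟨i.1, hlt, ?_, hmW⟩
        convert hiW
      · have hmj : m < j := by
          have hmv : m.1 = i.1 + 1 := rfl
          have hne : m ≠ j := by rintro rfl; exact hmW hjW
          have hne' : m.1 ≠ j.1 := fun e => hne (Fin.ext e)
          rw [Fin.lt_def] at hij ⊢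
          omega
        have hmv : m.1 = i.1 + 1 := rfl
        exact ih m j hmj (by rw [Fin.lt_def] at hij; omega) hmW hjW
  exact main (j.1 - i.1) i j hij le_rfl hiW hjW

lemma M_swap {W : Finset (Fin n)} {k : ℕ} (hk : k + 1 < n)
    (hp : (⟨k, Nat.lt_of_succ_lt hk⟩ : Fin n) ∉ W) (hq : (⟨k + 1, hk⟩ : Fin n) ∈ W) :
    M (W.image (Equiv.swap ⟨k, Nat.lt_of_succ_lt hk⟩ ⟨k + 1, hk⟩)) < M W := by
  set p : Fin n := ⟨k, Nat.lt_of_succ_lt hk⟩ with hpd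
  set q : Fin n := ⟨k + 1, hk⟩ with hqd
  have hpv : p.1 = k := rfl
  have hqv : q.1 = k + 1 := rfl
  set W' := W.image (Equiv.swap p q) with hW'
  have hpq : p < q := by rw [Fin.lt_def]; omega
  have hpqmem : (p, q) ∈ Finset.univ.filter
      (fun r : Fin n × Fin n => r.1 < r.2 ∧ r.1 ∉ W ∧ r.2 ∈ W) := by
    simp only [Finset.mem_filter, Finset.mem_univ, true_and]
    exact ⟨hpq, hp, hq⟩
  have hle : (Finset.univ.filter
        (fun r : Fin n × Fin n => r.1 < r.2 ∧ r.1 ∉ W' ∧ r.2 ∈ W')).card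
      ≤ ((Finset.univ.filter
        (fun r : Fin n × Fin n => r.1 < r.2 ∧ r.1 ∉ W ∧ r.2 ∈ W)).erase (p, q)).card := by
    apply Finset.card_le_card_of_injOn
      (fun r => (Equiv.swap p q r.1, Equiv.swap p q r.2))
    · intro r hr
      simp only [Finset.mem_coe] at hr ⊢
      simp only [Finset.mem_filter, Finset.mem_univ, true_and] at hr
      obtain ⟨hr1, hr2, hr3⟩ := hr
      rw [hW', mem_image_swap] at hr2 hr3
      have hr1p : r.1 ≠ p := by
        rintro h
        rw [h, Equiv.swap_apply_left] at hr2
        exact hr2 hq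
      have hcond : r.1 = r.2 ∨ (r.1 ≠ p ∧ r.1 ≠ q) ∨ (r.2 ≠ p ∧ r.2 ≠ q) := by
        rcases eq_or_ne r.1 q with h1q | h1q
        · right; right
          have hq2 : q < r.2 := h1q ▸ hr1
          exact ⟨fun e => absurd (e ▸ hq2) (asymm hpq),
            fun e => absurd (e ▸ hq2) (lt_irrefl q)⟩
        · right; left; exact ⟨hr1p, h1q⟩
      have hlt' : Equiv.swap p q r.1 < Equiv.swap p q r.2 :=
        (swap_lt_iff (show q.1 = p.1 + 1 from rfl) hcond).mpr hr1
      rw [Finset.mem_erase]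
      constructor
      · intro heq
        rw [Prod.mk.injEq] at heq
        have h1 : r.1 = q := by
          have := congrArg (Equiv.swap p q) heq.1
          rwa [Equiv.swap_apply_self, Equiv.swap_apply_left] at this
        have h2 : r.2 = p := by
          have := congrArg (Equiv.swap p q) heq.2
          rwa [Equiv.swap_apply_self, Equiv.swap_apply_right] at this
        rw [h1, h2] at hr1
        exact absurd (hr1.trans hpq) (lt_irrefl _)
      · simp only [Finset.mem_filter, Finset.mem_univ, true_and]
        exact ⟨hlt', hr2, hr3⟩
    · intro x _ y _ h
      simp only [Prod.mk.injEq] at h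
      exact Prod.ext ((Equiv.swap p q).injective h.1) ((Equiv.swap p q).injective h.2)
  have hlt2 := Finset.card_erase_lt_of_mem hpqmem
  simp only [M]
  omega

lemma downset_eq {a b : ℕ} {W : Finset (Fin (a + b))} (h0 : M W = 0) (hcard : W.card = a) :
    W = (Finset.univ : Finset (Fin (a + b))).filter (fun i => i.1 < a) := by
  have hds : ∀ i j : Fin (a + b), i < j → j ∈ W → i ∈ W := by
    intro i j hij hj
    by_contra hi
    have : (i, j) ∈ Finset.univ.filter
        (fun p : Fin (a + b) × Fin (a + b) => p.1 < p.2 ∧ p.1 ∉ W ∧ p.2 ∈ W) := by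
      simp only [Finset.mem_filter, Finset.mem_univ, true_and]
      exact ⟨hij, hi, hj⟩
    rw [M, Finset.card_eq_zero] at h0
    rw [h0] at this
    exact absurd this (Finset.notMem_empty _)
  ext i
  simp only [Finset.mem_filter, Finset.mem_univ, true_and]
  constructor
  · intro hi
    by_contra hia
    push_neg at hia
    have hsub : (Finset.univ : Finset (Fin (a + b))).filter (fun j => j.1 < i.1 + 1) ⊆ W := by
      intro j hj
      simp only [Finset.mem_filter, Finset.mem_univ, true_and] at hj
      rcases eq_or_ne j i with rfl | hne
      · exact hi
      · exact hds j i (by rw [Fin.lt_def]; have : j.1 ≠ i.1 := fun e => hne (Fin.ext e); omega) hi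
    have := Finset.card_le_card hsub
    rw [card_filter_lt_val, hcard] at this
    have := i.2
    omega
  · intro hia
    by_contra hi
    have hsub : W ⊆ (Finset.univ : Finset (Fin (a + b))).filter (fun j => j.1 < i.1) := by
      intro x hx
      simp only [Finset.mem_filter, Finset.mem_univ, true_and]
      by_contra hxi
      push_neg at hxi
      rcases eq_or_ne x i with rfl | hne
      · exact hi hx
      · exact hi (hds i x (by
          rw [Fin.lt_def]
          have : x.1 ≠ i.1 := fun e => hne (Fin.ext e)
          omega) hx)
    have := Finset.card_le_card hsub
    rw [card_filter_lt_val, hcard] at this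
    omega

lemma key_inj {a : ℕ} {ω₁ ω₂ : Equiv.Perm (Fin n)} (hW : Wd a ω₁ = Wd a ω₂)
    (hΦ : Φ a ω₁ = Φ a ω₂) : ω₁ = ω₂ := by
  have hinv : ∀ v, ω₁⁻¹ v = ω₂⁻¹ v := by
    intro v
    set Wv : Finset (Fin n) :=
      Finset.univ.filter (fun i => ((ω₁ i).1 < a ↔ v.1 < a)) with hWv
    have hx : ω₁⁻¹ v ∈ Wv := by
      simp only [hWv, Finset.mem_filter, Finset.mem_univ, true_and,
        perm_apply_inv_self]
    have hWmem : ∀ j : Fin n, ((ω₂ j).1 < a) ↔ ((ω₁ j).1 < a) := by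
      intro j
      have h1 : j ∈ Wd a ω₁ ↔ j ∈ Wd a ω₂ := by rw [hW]
      simp only [Wd, Finset.mem_filter, Finset.mem_univ, true_and] at h1
      exact h1.symm
    have hy : ω₂⁻¹ v ∈ Wv := by
      simp only [hWv, Finset.mem_filter, Finset.mem_univ, true_and]
      rw [← hWmem, perm_apply_inv_self]
    have hrank : ∀ ω : Equiv.Perm (Fin n),
        (∀ j : Fin n, ((ω j).1 < a) ↔ ((ω₁ j).1 < a)) →
        (Wv.filter (· < ω⁻¹ v)).card
          = (Finset.univ.filter (fun w => Φ a ω w v = true)).card := by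
      intro ω hωW
      have e1 : Wv.filter (· < ω⁻¹ v)
          = Finset.univ.filter (fun j => ((ω j).1 < a ↔ v.1 < a) ∧ j < ω⁻¹ v) := by
        ext j
        simp only [hWv, Finset.mem_filter, Finset.mem_univ, true_and, Finset.filter_filter]
        rw [hωW j]
      rw [e1, rank_transfer ω (fun w => (w.1 < a ↔ v.1 < a)) (ω⁻¹ v)]
      congr 1
      ext w
      simp only [Finset.mem_filter, Finset.mem_univ, true_and, Φ, decide_eq_true_eq]
    have h1 := hrank ω₁ (fun j => Iff.rfl)
    have h2 := hrank ω₂ hWmem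
    rw [hΦ] at h1
    exact rank_injOn hx hy (h1.trans h2.symm)
  have hinveq : ω₁⁻¹ = ω₂⁻¹ := Equiv.ext hinv
  calc ω₁ = (ω₁⁻¹)⁻¹ := by rw [inv_inv]
    _ = (ω₂⁻¹)⁻¹ := by rw [hinveq]
    _ = ω₂ := by rw [inv_inv]

lemma to_sorted (a : ℕ) (ω : Equiv.Perm (Fin n)) :
    ∃ ω₀, Relation.EqvGen (TypeIAdjacent a n) ω ω₀ ∧ M (Wd a ω₀) = 0 := by
  have main : ∀ m (ω : Equiv.Perm (Fin n)), M (Wd a ω) ≤ m →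
      ∃ ω₀, Relation.EqvGen (TypeIAdjacent a n) ω ω₀ ∧ M (Wd a ω₀) = 0 := by
    intro m
    induction m with
    | zero => intro ω h; exact ⟨ω, Relation.EqvGen.refl ω, Nat.le_zero.mp h⟩
    | succ m ih =>
      intro ω h
      by_cases h0 : M (Wd a ω) = 0
      · exact ⟨ω, Relation.EqvGen.refl ω, h0⟩
      · obtain ⟨k, hk, hpW, hqW⟩ := adjacent_pair h0
        set p : Fin n := ⟨k, Nat.lt_of_succ_lt hk⟩
        set q : Fin n := ⟨k + 1, hk⟩
        set ω' := ω * Equiv.swap p q with hω'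
        have hadj : TypeIAdjacent a n ω ω' := by
          refine ⟨k, hk, rfl, ?_⟩
          simp only [Wd, Finset.mem_filter, Finset.mem_univ, true_and] at hpW hqW
          tauto
        have hWd' : Wd a ω' = (Wd a ω).image (Equiv.swap p q) := Wd_mul_swap a ω p q
        have hM : M (Wd a ω') < M (Wd a ω) := by
          rw [hWd']
          exact M_swap hk hpW hqW
        obtain ⟨ω₀, hev, h0'⟩ := ih ω' (by omega)
        exact ⟨ω₀, Relation.EqvGen.trans _ _ _ (Relation.EqvGen.rel _ _ hadj) hev, h0'⟩
  exact main (M (Wd a ω)) ω le_rfl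

lemma exists_word (a b : ℕ) (W : Finset (Fin (a + b))) (hcard : W.card = a)
    (ω : Equiv.Perm (Fin (a + b))) :
    ∃ ω', Relation.EqvGen (TypeIAdjacent a (a + b)) ω ω' ∧ Wd a ω' = W := by
  have main : ∀ m (V : Finset (Fin (a + b))), V.card = a → M V ≤ m →
      ∃ ω', Relation.EqvGen (TypeIAdjacent a (a + b)) ω ω' ∧ Wd a ω' = V := by
    intro m
    induction m with
    | zero =>
      intro V hc h
      obtain ⟨ω₀, hev, h0⟩ := to_sorted a ω
      refine ⟨ω₀, hev, ?_⟩
      rw [downset_eq h0 (card_Wd a b ω₀), downset_eq (Nat.le_zero.mp h) hc]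
    | succ m ih =>
      intro V hc h
      by_cases h0 : M V = 0
      · obtain ⟨ω₀, hev, h0'⟩ := to_sorted a ω
        refine ⟨ω₀, hev, ?_⟩
        rw [downset_eq h0' (card_Wd a b ω₀), downset_eq h0 hc]
      · obtain ⟨k, hk, hpW, hqW⟩ := adjacent_pair h0
        set p : Fin (a + b) := ⟨k, Nat.lt_of_succ_lt hk⟩
        set q : Fin (a + b) := ⟨k + 1, hk⟩
        set V' := V.image (Equiv.swap p q) with hV'
        have hM : M V' < M V := M_swap hk hpW hqW
        have hc' : V'.card = a := by
          rw [hV', Finset.card_image_of_injective _ (Equiv.swap p q).injective, hc]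
        obtain ⟨ω'', hev, hWd⟩ := ih V' hc' (by omega)
        set ω' := ω'' * Equiv.swap p q with hω'
        have hpV' : p ∈ V' := by rw [hV', mem_image_swap, Equiv.swap_apply_left]; exact hqW
        have hqV' : q ∉ V' := by rw [hV', mem_image_swap, Equiv.swap_apply_right]; exact hpW
        have hadj : TypeIAdjacent a (a + b) ω'' ω' := by
          refine ⟨k, hk, rfl, ?_⟩
          rw [← hWd] at hpV' hqV'
          simp only [Wd, Finset.mem_filter, Finset.mem_univ, true_and] at hpV' hqV'
          tauto
        refine ⟨ω', Relation.EqvGen.trans _ _ _ hev (Relation.EqvGen.rel _ _ hadj), ?_⟩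
        rw [hω', Wd_mul_swap, hWd, hV', image_swap_image_swap]
  exact main (M W) W hcard le_rfl

lemma class_eq_fiber (a b : ℕ) (ω : Equiv.Perm (Fin (a + b))) :
    {ω' | Relation.EqvGen (TypeIAdjacent a (a + b)) ω ω'}
      = {ω' | Φ a ω' = Φ a ω} := by
  ext ω'
  simp only [Set.mem_setOf_eq]
  constructor
  · intro h
    exact (Φ_eqvGen h).symm
  · intro hΦ
    obtain ⟨ω'', hev, hWd⟩ := exists_word a b (Wd a ω') (card_Wd a b ω') ω
    have hΦ'' : Φ a ω'' = Φ a ω' := (Φ_eqvGen hev).symm.trans hΦ.symm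
    have : ω'' = ω' := key_inj hWd hΦ''
    rwa [this] at hev

lemma fiber_card (a b : ℕ) (ω : Equiv.Perm (Fin (a + b))) :
    (Finset.univ.filter (fun ω' : Equiv.Perm (Fin (a + b)) => Φ a ω' = Φ a ω)).card
      = (a + b).choose a := by
  have : (Finset.univ.filter (fun ω' : Equiv.Perm (Fin (a + b)) => Φ a ω' = Φ a ω)).card
      = (Finset.powersetCard a (Finset.univ : Finset (Fin (a + b)))).card := by
    apply Finset.card_bij (fun ω' _ => Wd a ω')
    · intro ω' _
      rw [Finset.mem_powersetCard]
      exact ⟨Finset.subset_univ _, card_Wd a b ω'⟩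
    · intro x hx y hy h
      simp only [Finset.mem_filter, Finset.mem_univ, true_and] at hx hy
      exact key_inj h (hx.trans hy.symm)
    · intro W hW
      rw [Finset.mem_powersetCard] at hW
      obtain ⟨ω', hev, hWd⟩ := exists_word a b W hW.2 ω
      refine ⟨ω', ?_, hWd⟩
      simp only [Finset.mem_filter, Finset.mem_univ, true_and]
      exact (Φ_eqvGen hev).symm
  rw [this, Finset.card_powersetCard, Finset.card_univ, Fintype.card_fin]

lemma choose_eq (a b : ℕ) :
    (a + b).choose a = (a + b).factorial / (a.factorial * b.factorial) := by
  rw [Nat.choose_eq_factorial_div_factorial (Nat.le_add_right a b)]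
  have h : a + b - a = b := by omega
  rw [h]

lemma choose_mul (a b : ℕ) :
    (a + b).choose a * (a.factorial * b.factorial) = (a + b).factorial := by
  have h := Nat.choose_mul_factorial_mul_factorial (Nat.le_add_right a b)
  have h2 : a + b - a = b := by omega
  rw [h2] at h
  rw [← h]
  ring

end GITAux

/-- For the toric `cA_{n-1}` singularity `R_{a,b}` (`n = a+b`), every
GIT region of `Θ(Q)_ℝ` — a connected component after deleting all type I walls, i.e.
an equivalence class of chambers `C_ω` under crossings of type I walls — contains
exactly `n!/(a! b!)` chambers, and the number of GIT regions is `a! · b!`. -/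
theorem git_regions_count (a b : ℕ) :
    (∀ ω : Equiv.Perm (Fin (a + b)),
      {ω' | Relation.EqvGen (TypeIAdjacent a (a + b)) ω ω'}.ncard
        = (a + b).factorial / (a.factorial * b.factorial)) ∧
    {S : Set (Equiv.Perm (Fin (a + b))) |
        ∃ ω, S = {ω' | Relation.EqvGen (TypeIAdjacent a (a + b)) ω ω'}}.ncard
      = a.factorial * b.factorial := by
  classical
  open GITAux in
  constructor
  · intro ω
    rw [class_eq_fiber a b ω]
    have hset : {ω' : Equiv.Perm (Fin (a + b)) | Φ a ω' = Φ a ω}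
        = ↑(Finset.univ.filter (fun ω' : Equiv.Perm (Fin (a + b)) => Φ a ω' = Φ a ω)) := by
      ext x; simp
    rw [hset, Set.ncard_coe_finset, fiber_card a b ω, choose_eq]
  · -- number of regions
    have hsetrw : {S : Set (Equiv.Perm (Fin (a + b))) |
        ∃ ω, S = {ω' | Relation.EqvGen (TypeIAdjacent a (a + b)) ω ω'}}
        = (fun x => {ω' : Equiv.Perm (Fin (a + b)) | Φ a ω' = x}) '' Set.range (Φ a) := by
      ext S
      simp only [Set.mem_setOf_eq, Set.mem_image, Set.mem_range]
      constructor
      · rintro ⟨ω, rfl⟩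
        exact ⟨Φ a ω, ⟨ω, rfl⟩, (class_eq_fiber a b ω).symm⟩
      · rintro ⟨x, ⟨ω, rfl⟩, rfl⟩
        exact ⟨ω, (class_eq_fiber a b ω).symm⟩
    rw [hsetrw]
    rw [Set.ncard_image_of_injOn (by
      rintro x ⟨ω, rfl⟩ y ⟨ω', rfl⟩ h
      have h2 : ω ∈ (fun x => {ω'' : Equiv.Perm (Fin (a + b)) | Φ a ω'' = x}) (Φ a ω) := rfl
      rw [h] at h2
      exact h2)]
    have hrange : Set.range (Φ a (n := a + b))
        = ↑(Finset.univ.image (Φ a (n := a + b))) := by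
      ext x
      simp [Set.mem_range, Finset.mem_image]
    rw [hrange, Set.ncard_coe_finset]
    -- fiberwise counting
    have hcount := Finset.card_eq_sum_card_fiberwise
      (f := Φ a (n := a + b)) (s := Finset.univ) (t := Finset.univ.image (Φ a))
      (fun x _ => Finset.mem_image_of_mem _ (Finset.mem_univ x))
    have hterm : ∀ y ∈ Finset.univ.image (Φ a (n := a + b)),
        (Finset.univ.filter (fun ω' => Φ a ω' = y)).card = (a + b).choose a := by
      intro y hy
      rw [Finset.mem_image] at hy
      obtain ⟨ω, _, rfl⟩ := hy
      exact fiber_card a b ω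
    rw [Finset.sum_congr rfl hterm, Finset.sum_const, smul_eq_mul] at hcount
    have hcard : (Finset.univ : Finset (Equiv.Perm (Fin (a + b)))).card
        = (a + b).factorial := by
      rw [Finset.card_univ, Fintype.card_perm, Fintype.card_fin]
    rw [hcard] at hcount
    have hpos : 0 < (a + b).choose a := Nat.choose_pos (Nat.le_add_right a b)
    have hmul := choose_mul a b
    have : (Finset.univ.image (Φ a (n := a + b))).card * (a + b).choose a
        = (a.factorial * b.factorial) * (a + b).choose a := by
      rw [← hcount, ← hmul]; ring
    exact Nat.eq_of_mul_eq_mul_right hpos this
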